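/- (Deterministic core of the PER-ETD(0) bias bound, Proposition 1) Let P be an N×N row-stochastic matrix, γ, χ ∈ (0,1) with γ ≠ χ, C_M ≥ 0, and b ≥ 1 an integer. Let d, d₀, d₁, …, d_b ∈ ℝ^N be probability vectors with ‖d − d_τ‖₁ ≤ C_M χ^τ for τ = 1, …, b. Let f ∈ ℝ^N satisfy f = d + γ Pᵀ f, set f₀ = d₀, and define f_τ = d_τ + γ Pᵀ f_{τ−1} for τ = 1, …, b. Let Φ be an N×k real matrix whose rows φ(s) satisfy ‖φ(s)‖₂ ≤ B_φ, let r ∈ ℝ^N, let V ∈ ℝ^N satisfy V = r + γ P V, and let θ, θ* ∈ ℝ^k with ε = ‖Φθ* − V‖_∞. Then ‖Φᵀ diag(f − f_b) ((I − γP)Φθ − r)‖₂ ≤ C_b (B_φ ‖θ − θ*‖₂ + ε) · ξ^b, where ξ = max{γ, χ} and C_b = B_φ(1+γ)(C_M/|χ−γ| + 1 + ‖f‖₁). -/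

import Mathlib

open Matrix BigOperators

private lemma l1_contract {N : ℕ} (P : Matrix (Fin N) (Fin N) ℝ)
    (hP0 : ∀ i j, 0 ≤ P i j) (hProw : ∀ i, ∑ j, P i j = 1) (v : Fin N → ℝ) :
    ∑ j, |(Pᵀ *ᵥ v) j| ≤ ∑ i, |v i| := by
  have h1 : ∀ j, |(Pᵀ *ᵥ v) j| ≤ ∑ i, P i j * |v i| := by
    intro j
    calc |(Pᵀ *ᵥ v) j| = |∑ i, P i j * v i| := by
          simp [Matrix.mulVec, dotProduct, Matrix.transpose_apply]
      _ ≤ ∑ i, |P i j * v i| := Finset.abs_sum_le_sum_abs _ _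
      _ = ∑ i, P i j * |v i| := by
          refine Finset.sum_congr rfl fun i _ => ?_
          rw [abs_mul, abs_of_nonneg (hP0 i j)]
  calc ∑ j, |(Pᵀ *ᵥ v) j| ≤ ∑ j, ∑ i, P i j * |v i| :=
        Finset.sum_le_sum fun j _ => h1 j
    _ = ∑ i, ∑ j, P i j * |v i| := Finset.sum_comm
    _ = ∑ i, |v i| := by
        refine Finset.sum_congr rfl fun i _ => ?_
        rw [← Finset.sum_mul, hProw i, one_mul]

private lemma linf_contract {N : ℕ} (P : Matrix (Fin N) (Fin N) ℝ)
    (hP0 : ∀ i j, 0 ≤ P i j) (hProw : ∀ i, ∑ j, P i j = 1) (v : Fin N → ℝ)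
    (c : ℝ) (hv : ∀ i, |v i| ≤ c) (i : Fin N) : |(P *ᵥ v) i| ≤ c := by
  calc |(P *ᵥ v) i| = |∑ j, P i j * v j| := by
        simp [Matrix.mulVec, dotProduct]
    _ ≤ ∑ j, |P i j * v j| := Finset.abs_sum_le_sum_abs _ _
    _ ≤ ∑ j, P i j * c := by
        refine Finset.sum_le_sum fun j _ => ?_
        rw [abs_mul, abs_of_nonneg (hP0 i j)]
        exact mul_le_mul_of_nonneg_left (hv j) (hP0 i j)
    _ = c := by rw [← Finset.sum_mul, hProw i, one_mul]

private lemma cs_abs {k : ℕ} (a x : Fin k → ℝ) :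
    |∑ j, a j * x j| ≤ Real.sqrt (∑ j, a j ^ 2) * Real.sqrt (∑ j, x j ^ 2) := by
  calc |∑ j, a j * x j| = Real.sqrt ((∑ j, a j * x j) ^ 2) := (Real.sqrt_sq_eq_abs _).symm
    _ ≤ Real.sqrt ((∑ j, a j ^ 2) * (∑ j, x j ^ 2)) :=
        Real.sqrt_le_sqrt (Finset.sum_mul_sq_le_sq_mul_sq _ _ _)
    _ = _ := Real.sqrt_mul (Finset.sum_nonneg fun j _ => sq_nonneg _) _

private lemma l2_tri {N k : ℕ} (c : Fin N → ℝ) (Φ : Matrix (Fin N) (Fin k) ℝ) :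
    Real.sqrt (∑ j, (∑ s, c s * Φ s j) ^ 2) ≤
      ∑ s, |c s| * Real.sqrt (∑ j, Φ s j ^ 2) := by
  classical
  set w : Fin N → EuclideanSpace ℝ (Fin k) :=
    fun s => (WithLp.equiv 2 _).symm (fun j => Φ s j) with hw
  have hnorm : ∀ s, ‖w s‖ = Real.sqrt (∑ j, Φ s j ^ 2) := by
    intro s
    rw [EuclideanSpace.norm_eq]
    congr 1
    exact Finset.sum_congr rfl fun j _ => by simp [hw, sq_abs]
  have key : Real.sqrt (∑ j, (∑ s, c s * Φ s j) ^ 2) = ‖∑ s, c s • w s‖ := by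
    rw [EuclideanSpace.norm_eq]
    congr 1
    refine Finset.sum_congr rfl fun j _ => ?_
    rw [Real.norm_eq_abs, sq_abs]
    have hs : (∑ s, c s • w s : EuclideanSpace ℝ (Fin k)) j = ∑ s, (c s • w s) j := by
      have h' := map_sum (EuclideanSpace.proj j (𝕜 := ℝ)) (fun s => c s • w s) Finset.univ
      simp only [PiLp.proj_apply] at h'
      exact h'
    congr 1
    refine Eq.symm (hs.trans ?_)
    refine Finset.sum_congr rfl fun s _ => ?_
    simp [hw, mul_comm]
  rw [key]
  calc ‖∑ s, c s • w s‖ ≤ ∑ s, ‖c s • w s‖ := norm_sum_le _ _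
    _ = ∑ s, |c s| * Real.sqrt (∑ j, Φ s j ^ 2) := by
        refine Finset.sum_congr rfl fun s _ => ?_
        rw [norm_smul, hnorm, Real.norm_eq_abs]
/-- Deterministic core of the PER-ETD(0) bias bound, Proposition 1:
With `P` row-stochastic, `γ, χ ∈ (0,1)`, `γ ≠ χ`, `C_M ≥ 0`, `b ≥ 1`, probability
vectors `d, d₀, …, d_b` with `‖d - d_τ‖₁ ≤ C_M χ^τ` for `τ = 1, …, b`,
`f = d + γ Pᵀ f`, `f₀ = d₀`, `f_τ = d_τ + γ Pᵀ f_{τ-1}`, a feature matrix `Φ` with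
rows of Euclidean norm at most `B_φ`, `V = r + γ P V`, and `ε = ‖Φθ* - V‖_∞`:
`‖Φᵀ diag(f - f_b) ((I - γP)Φθ - r)‖₂ ≤ C_b (B_φ ‖θ - θ*‖₂ + ε) ξ^b`, where
`ξ = max γ χ` and `C_b = B_φ (1+γ) (C_M/|χ-γ| + 1 + ‖f‖₁)`. -/
theorem per_etd0_bias_bound (N k : ℕ) (hN : 0 < N)
    (P : Matrix (Fin N) (Fin N) ℝ)
    (hP0 : ∀ i j, 0 ≤ P i j) (hProw : ∀ i, ∑ j, P i j = 1)
    (γ χ : ℝ) (hγ0 : 0 < γ) (hγ1 : γ < 1) (hχ0 : 0 < χ) (hχ1 : χ < 1) (hγχ : γ ≠ χ)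
    (CM : ℝ) (hCM : 0 ≤ CM) (b : ℕ) (hb : 1 ≤ b)
    (d : Fin N → ℝ) (hd0 : ∀ i, 0 ≤ d i) (hd1 : ∑ i, d i = 1)
    (dseq : ℕ → Fin N → ℝ)
    (hdseq0 : ∀ τ, τ ≤ b → ∀ i, 0 ≤ dseq τ i)
    (hdseq1 : ∀ τ, τ ≤ b → ∑ i, dseq τ i = 1)
    (hdτ : ∀ τ, 1 ≤ τ → τ ≤ b → ∑ i, |d i - dseq τ i| ≤ CM * χ ^ τ)
    (f : Fin N → ℝ) (hf : f = d + γ • (Pᵀ *ᵥ f))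
    (F : ℕ → Fin N → ℝ) (hF0 : F 0 = dseq 0)
    (hFrec : ∀ τ, 1 ≤ τ → τ ≤ b → F τ = dseq τ + γ • (Pᵀ *ᵥ F (τ - 1)))
    (Φ : Matrix (Fin N) (Fin k) ℝ) (Bφ : ℝ)
    (hΦ : ∀ s, Real.sqrt (∑ j, (Φ s j) ^ 2) ≤ Bφ)
    (r V : Fin N → ℝ) (hV : V = r + γ • (P *ᵥ V))
    (θ θs : Fin k → ℝ) :
    Real.sqrt (∑ j, (((Φᵀ * Matrix.diagonal (fun i => f i - F b i)) *ᵥ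
        ((((1 : Matrix (Fin N) (Fin N) ℝ) - γ • P) * Φ) *ᵥ θ - r)) j) ^ 2) ≤
      (Bφ * (1 + γ) * (CM / |χ - γ| + 1 + ∑ i, |f i|)) *
        (Bφ * Real.sqrt (∑ i, (θ i - θs i) ^ 2) +
          Finset.univ.sup' ⟨⟨0, hN⟩, Finset.mem_univ _⟩
            (fun s => |(Φ *ᵥ θs) s - V s|)) *
        (max γ χ) ^ b := by
  classical
  have hBφ0 : 0 ≤ Bφ := le_trans (Real.sqrt_nonneg _) (hΦ ⟨0, hN⟩)
  set δ := Real.sqrt (∑ i, (θ i - θs i) ^ 2) with hδ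
  set ε := Finset.univ.sup' ⟨⟨0, hN⟩, Finset.mem_univ _⟩
      (fun s => |(Φ *ᵥ θs) s - V s|) with hε
  have hδ0 : 0 ≤ δ := Real.sqrt_nonneg _
  have hε0 : 0 ≤ ε :=
    le_trans (abs_nonneg ((Φ *ᵥ θs) ⟨0, hN⟩ - V ⟨0, hN⟩))
      (Finset.le_sup' (fun s => |(Φ *ᵥ θs) s - V s|)
        (Finset.mem_univ (⟨0, hN⟩ : Fin N)))
  set c : Fin N → ℝ := fun i => f i - F b i with hc
  set g : Fin N → ℝ :=
    ((((1 : Matrix (Fin N) (Fin N) ℝ) - γ • P) * Φ) *ᵥ θ - r) with hgdef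
  set G := (1 + γ) * (Bφ * δ + ε) with hG
  -- Step 1: pointwise bound on g
  have hGb : ∀ s, |g s| ≤ G := by
    set e : Fin N → ℝ := Φ *ᵥ θ - Φ *ᵥ θs with he
    set hh : Fin N → ℝ := Φ *ᵥ θs - V with hhh
    have heb : ∀ s, |e s| ≤ Bφ * δ := by
      intro s
      have h1 : e s = ∑ j, Φ s j * (θ j - θs j) := by
        simp [he, Matrix.mulVec, dotProduct, mul_sub, Finset.sum_sub_distrib]
      rw [h1]
      calc |∑ j, Φ s j * (θ j - θs j)|
          ≤ Real.sqrt (∑ j, Φ s j ^ 2) * Real.sqrt (∑ j, (θ j - θs j) ^ 2) :=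
            cs_abs _ _
        _ ≤ Bφ * δ :=
            mul_le_mul_of_nonneg_right (hΦ s) (Real.sqrt_nonneg _)
    have hhb : ∀ s, |hh s| ≤ ε := fun s =>
      Finset.le_sup' (fun s => |(Φ *ᵥ θs) s - V s|) (Finset.mem_univ s)
    have hsum : ∀ s, |e s + hh s| ≤ Bφ * δ + ε := fun s =>
      (abs_add_le _ _).trans (add_le_add (heb s) (hhb s))
    have hr : r = V - γ • (P *ᵥ V) := eq_sub_iff_add_eq.mpr hV.symm
    have hgeq : g = (e + hh) - γ • (P *ᵥ (e + hh)) := by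
      have h2 : e + hh = Φ *ᵥ θ - V := by rw [he, hhh]; abel
      rw [hgdef, h2, hr, Matrix.sub_mul, Matrix.one_mul, Matrix.smul_mul,
        Matrix.sub_mulVec, Matrix.smul_mulVec, ← Matrix.mulVec_mulVec,
        Matrix.mulVec_sub, smul_sub]
      abel
    intro s
    have h3 : g s = (e s + hh s) - γ * (P *ᵥ (e + hh)) s := by rw [hgeq]; rfl
    rw [h3]
    calc |(e s + hh s) - γ * (P *ᵥ (e + hh)) s|
        ≤ |e s + hh s| + γ * |(P *ᵥ (e + hh)) s| := by
          rw [sub_eq_add_neg]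
          refine (abs_add_le _ _).trans ?_
          rw [abs_neg, abs_mul, abs_of_nonneg hγ0.le]
      _ ≤ (Bφ * δ + ε) + γ * (Bφ * δ + ε) := by
          refine add_le_add (hsum s) (mul_le_mul_of_nonneg_left ?_ hγ0.le)
          exact linf_contract P hP0 hProw _ _ (fun i => by simpa using hsum i) s
      _ = G := by rw [hG]; ring
  have hG0 : 0 ≤ G := by
    rw [hG]
    have : 0 ≤ Bφ * δ + ε := by positivity
    positivity
  -- Step 2: ℓ¹ bound on f - F b
  set A := 1 + ∑ i, |f i| with hA
  have hA0 : 0 ≤ A := by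
    rw [hA]; positivity
  have hne : γ - χ ≠ 0 := sub_ne_zero.mpr hγχ
  have hS : ∀ τ, τ ≤ b →
      ∑ i, |f i - F τ i| ≤ CM * χ * ((γ ^ τ - χ ^ τ) / (γ - χ)) + γ ^ τ * A := by
    intro τ
    induction τ with
    | zero =>
        intro _
        rw [hF0]
        simp only [pow_zero, sub_self, zero_div, mul_zero, zero_add, one_mul]
        calc ∑ i, |f i - dseq 0 i| ≤ ∑ i, (|f i| + |dseq 0 i|) := by
              refine Finset.sum_le_sum fun i _ => ?_
              rw [sub_eq_add_neg]
              exact (abs_add_le _ _).trans (by rw [abs_neg])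
          _ = ∑ i, |f i| + ∑ i, dseq 0 i := by
              rw [Finset.sum_add_distrib]
              congr 1
              exact Finset.sum_congr rfl fun i _ =>
                abs_of_nonneg (hdseq0 0 (Nat.zero_le b) i)
          _ = A := by rw [hdseq1 0 (Nat.zero_le b), hA]; ring
    | succ τ ih =>
        intro hτb
        have hτb' : τ ≤ b := Nat.le_of_succ_le hτb
        have hFt : F (τ + 1) = dseq (τ + 1) + γ • (Pᵀ *ᵥ F τ) := by
          have := hFrec (τ + 1) (Nat.succ_le_succ (Nat.zero_le τ)) hτb
          simpa using this
        have hpt : ∀ i, f i - F (τ + 1) i =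
            (d i - dseq (τ + 1) i) + γ * (Pᵀ *ᵥ (fun j => f j - F τ j)) i := by
          intro i
          have h1 : f i = d i + γ * (Pᵀ *ᵥ f) i := congrFun hf i
          have h2 : F (τ + 1) i = dseq (τ + 1) i + γ * (Pᵀ *ᵥ F τ) i := congrFun hFt i
          have h3 : (Pᵀ *ᵥ (fun j => f j - F τ j)) i = (Pᵀ *ᵥ f) i - (Pᵀ *ᵥ F τ) i := by
            have : (fun j => f j - F τ j) = f - F τ := rfl
            rw [this, Matrix.mulVec_sub]
            rfl
          rw [h1, h2, h3]; ring
        calc ∑ i, |f i - F (τ + 1) i|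
            ≤ ∑ i, (|d i - dseq (τ + 1) i| +
                γ * |(Pᵀ *ᵥ (fun j => f j - F τ j)) i|) := by
              refine Finset.sum_le_sum fun i _ => ?_
              rw [hpt i]
              refine (abs_add_le _ _).trans ?_
              rw [abs_mul, abs_of_nonneg hγ0.le]
          _ = ∑ i, |d i - dseq (τ + 1) i| +
              γ * ∑ i, |(Pᵀ *ᵥ (fun j => f j - F τ j)) i| := by
              rw [Finset.sum_add_distrib, Finset.mul_sum]
          _ ≤ CM * χ ^ (τ + 1) + γ * ∑ i, |f i - F τ i| := by
              refine add_le_add (hdτ (τ + 1) (Nat.succ_le_succ (Nat.zero_le τ)) hτb)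
                (mul_le_mul_of_nonneg_left ?_ hγ0.le)
              exact l1_contract P hP0 hProw _
          _ ≤ CM * χ ^ (τ + 1) +
              γ * (CM * χ * ((γ ^ τ - χ ^ τ) / (γ - χ)) + γ ^ τ * A) := by
              refine add_le_add_right (mul_le_mul_of_nonneg_left (ih hτb') hγ0.le) _
          _ = CM * χ * ((γ ^ (τ + 1) - χ ^ (τ + 1)) / (γ - χ)) + γ ^ (τ + 1) * A := by
              field_simp
              ring
  -- Step 3: bound ∑ |c i| by (CM/|χ-γ| + A) ξ^b
  set ξ := max γ χ with hξ
  have hξ0 : 0 ≤ ξ := le_trans hγ0.le (le_max_left _ _)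
  have hSb : ∑ i, |c i| ≤ (CM / |χ - γ| + A) * ξ ^ b := by
    have h1 := hS b le_rfl
    have hγb : γ ^ b ≤ ξ ^ b := pow_le_pow_left₀ hγ0.le (le_max_left _ _) b
    have hχb : χ ^ b ≤ ξ ^ b := pow_le_pow_left₀ hχ0.le (le_max_right _ _) b
    have habs : |γ ^ b - χ ^ b| ≤ ξ ^ b := by
      rw [abs_sub_le_iff]
      constructor
      · nlinarith [pow_pos hχ0 b]
      · nlinarith [pow_pos hγ0 b]
    have h2 : CM * χ * ((γ ^ b - χ ^ b) / (γ - χ)) ≤ CM / |χ - γ| * ξ ^ b := by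
      have hceq : |χ - γ| = |γ - χ| := abs_sub_comm _ _
      calc CM * χ * ((γ ^ b - χ ^ b) / (γ - χ))
          ≤ |CM * χ * ((γ ^ b - χ ^ b) / (γ - χ))| := le_abs_self _
        _ = CM * χ * (|γ ^ b - χ ^ b| / |γ - χ|) := by
            rw [abs_mul, abs_mul, abs_div, abs_of_nonneg hCM, abs_of_nonneg hχ0.le]
        _ ≤ CM * 1 * (ξ ^ b / |γ - χ|) := by
            have hd0' : 0 < |γ - χ| := abs_pos.mpr hne
            gcongr
        _ = CM / |χ - γ| * ξ ^ b := by rw [hceq]; ring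
    have h3 : γ ^ b * A ≤ ξ ^ b * A := mul_le_mul_of_nonneg_right hγb hA0
    calc ∑ i, |c i| ≤ CM * χ * ((γ ^ b - χ ^ b) / (γ - χ)) + γ ^ b * A := h1
      _ ≤ CM / |χ - γ| * ξ ^ b + ξ ^ b * A := add_le_add h2 h3
      _ = (CM / |χ - γ| + A) * ξ ^ b := by ring
  -- Step 4: combine
  have hu : ∀ j, ((Φᵀ * Matrix.diagonal c) *ᵥ g) j = ∑ s, (c s * g s) * Φ s j := by
    intro j
    simp only [Matrix.mulVec, dotProduct, Matrix.mul_diagonal,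
      Matrix.transpose_apply]
    exact Finset.sum_congr rfl fun s _ => by ring
  calc Real.sqrt (∑ j, (((Φᵀ * Matrix.diagonal c) *ᵥ g) j) ^ 2)
      = Real.sqrt (∑ j, (∑ s, (c s * g s) * Φ s j) ^ 2) := by
        congr 1
        exact Finset.sum_congr rfl fun j _ => by rw [hu j]
    _ ≤ ∑ s, |c s * g s| * Real.sqrt (∑ j, Φ s j ^ 2) := l2_tri _ _
    _ ≤ ∑ s, |c s| * G * Bφ := by
        refine Finset.sum_le_sum fun s _ => ?_
        rw [abs_mul]
        calc |c s| * |g s| * Real.sqrt (∑ j, Φ s j ^ 2)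
            ≤ |c s| * G * Real.sqrt (∑ j, Φ s j ^ 2) := by
              refine mul_le_mul_of_nonneg_right
                (mul_le_mul_of_nonneg_left (hGb s) (abs_nonneg _)) (Real.sqrt_nonneg _)
          _ ≤ |c s| * G * Bφ := by
              refine mul_le_mul_of_nonneg_left (hΦ s) ?_
              exact mul_nonneg (abs_nonneg _) hG0
    _ = (∑ s, |c s|) * G * Bφ := by rw [← Finset.sum_mul, ← Finset.sum_mul]
    _ ≤ ((CM / |χ - γ| + A) * ξ ^ b) * G * Bφ := by
        refine mul_le_mul_of_nonneg_right
          (mul_le_mul_of_nonneg_right hSb hG0) hBφ0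
    _ = (Bφ * (1 + γ) * (CM / |χ - γ| + 1 + ∑ i, |f i|)) * (Bφ * δ + ε) * ξ ^ b := by
        rw [hG, hA]; ring
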